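/- Let a, b, k be natural numbers with a ≥ b and k ≤ b. Then a − b divides lcm(k) · (C(a, k) − C(b, k)) in ℤ. -/

import Mathlib

/-- `ulcm k` is the least common multiple of `1, 2, …, k`, with `ulcm 0 = 1`. -/
def ulcm (k : ℕ) : ℕ := (Finset.Icc 1 k).lcm id

/-- `mu m` is the largest prime power dividing `m`. -/
def mu (m : ℕ) : ℕ := m.primeFactors.sup fun p => p ^ m.factorization p

/-- `f : ZMod n → ZMod m` is congruence preserving. -/
def CongPres (n m : ℕ) (f : ZMod n → ZMod m) : Prop :=
  ∀ d : ℕ, ∀ hd : d ∣ m, ∀ a b : ℕ, a < n → b < n → a ≡ b [MOD d] →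
    ZMod.castHom hd (ZMod d) (f a) = ZMod.castHom hd (ZMod d) (f b)

/-- `CP n m` is the number of congruence preserving functions `ZMod n → ZMod m`. -/
noncomputable def CP (n m : ℕ) : ℕ := Nat.card {f : ZMod n → ZMod m // CongPres n m f}

lemma aux_dvd (n i k : ℕ) (hi : 1 ≤ i) (hik : i ≤ k) :
    (n : ℤ) ∣ (ulcm k : ℤ) * (n.choose i : ℤ) := by
  obtain ⟨c, hc⟩ : i ∣ ulcm k := Finset.dvd_lcm (Finset.mem_Icc.mpr ⟨hi, hik⟩)
  have hnat : n ∣ i * n.choose i := by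
    obtain ⟨j, rfl⟩ := Nat.exists_eq_add_of_le hi
    cases n with
    | zero =>
      rw [Nat.choose_eq_zero_of_lt (by omega)]
      simp
    | succ m =>
      have := Nat.add_one_mul_choose_eq m j
      exact ⟨m.choose j, by rw [Nat.mul_comm (1 + j), Nat.add_comm 1 j, ← this]⟩
  obtain ⟨d, hd⟩ := hnat
  refine ⟨c * d, ?_⟩
  have hd' : (i : ℤ) * (n.choose i : ℤ) = (n : ℤ) * d := by exact_mod_cast hd
  rw [hc]
  push_cast
  linear_combination (c : ℤ) * hd'

theorem stmt_4 (a b k : ℕ) (hba : b ≤ a) (hkb : k ≤ b) :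
    ((a : ℤ) - (b : ℤ)) ∣ (ulcm k : ℤ) * ((Nat.choose a k : ℤ) - (Nat.choose b k : ℤ)) := by
  obtain ⟨n, rfl⟩ := Nat.exists_eq_add_of_le hba
  have hcast : ((b : ℤ) + n) - b = (n : ℤ) := by ring
  push_cast
  rw [hcast]
  rw [Nat.add_comm b n, Nat.add_choose_eq]
  have hmem : ((0 : ℕ), k) ∈ Finset.HasAntidiagonal.antidiagonal k := by simp
  rw [← Finset.add_sum_erase _ _ hmem]
  push_cast
  simp only [Nat.choose_zero_right, Nat.cast_one, one_mul]
  rw [add_sub_cancel_left, Finset.mul_sum]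
  refine Finset.dvd_sum ?_
  rintro ⟨i, j⟩ hij
  rw [Finset.mem_erase, Finset.HasAntidiagonal.mem_antidiagonal] at hij
  obtain ⟨hne, hsum⟩ := hij
  have hsum' : i + j = k := hsum
  have hi1 : 1 ≤ i := by
    rcases Nat.eq_zero_or_pos i with h | h
    · subst h
      exact absurd (show ((0:ℕ), j) = (0, k) by simp only [Prod.mk.injEq]; exact ⟨trivial, by omega⟩) hne
    · exact h
  have hik : i ≤ k := by omega
  have := aux_dvd n i k hi1 hik
  calc (n : ℤ) ∣ (ulcm k : ℤ) * (n.choose i : ℤ) := this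
    _ ∣ (ulcm k : ℤ) * ((n.choose i : ℤ) * (b.choose j : ℤ)) := by
        exact mul_dvd_mul_left _ (dvd_mul_right _ _)
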